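/- Let d, r be natural numbers and let D be a Borel probability measure on ℝ^d such that for every multi-index α ∈ ℕ^d with α₁+⋯+α_d ≤ r the monomial x ↦ x₁^{α₁}⋯x_d^{α_d} is integrable with respect to D. Then there exists a Borel probability measure G on ℝ^d whose support is a finite set of cardinality at most the number of multi-indices α ∈ ℕ^d with α₁+⋯+α_d ≤ r, and such that for every multi-index α with α₁+⋯+α_d ≤ r one has ∫ x₁^{α₁}⋯x_d^{α_d} dG = ∫ x₁^{α₁}⋯x_d^{α_d} dD. -/

import Mathlib

open MeasureTheory

/-- The support of a measure: the smallest closed set whose complement has measure zero,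
realized as the intersection of all closed sets with null complement. -/
def measureSupport {X : Type*} [TopologicalSpace X] [MeasurableSpace X]
    (μ : Measure X) : Set X :=
  ⋂₀ {s : Set X | IsClosed s ∧ μ sᶜ = 0}

open Set Module in
/-- Auxiliary: the integral of an integrable function with values in a finite-dimensional
inner product space lies in the convex hull of its essential range. -/
theorem integral_mem_convexHull_aux :
    ∀ (n : ℕ) (E : Type) [NormedAddCommGroup E] [InnerProductSpace ℝ E]
      [FiniteDimensional ℝ E], finrank ℝ E ≤ n →
    ∀ (X : Type) [MeasurableSpace X] (μ : Measure X) [IsProbabilityMeasure μ]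
      (f : X → E), Integrable f μ → ∀ (t : Set X), μ tᶜ = 0 →
      ∃ s : Set X, μ sᶜ = 0 ∧ s ⊆ t ∧ (∫ x, f x ∂μ) ∈ convexHull ℝ (f '' s) := by
  intro n
  induction n with
  | zero =>
    intro E _ _ _ hrk X _ μ _ f hf t ht
    have hsub : Subsingleton E := finrank_zero_iff.mp (Nat.le_zero.mp hrk)
    have htne : t.Nonempty := by
      by_contra h
      rw [Set.not_nonempty_iff_eq_empty] at h
      rw [h, Set.compl_empty, measure_univ] at ht
      exact one_ne_zero ht
    obtain ⟨x₀, hx₀⟩ := htne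
    refine ⟨t, ht, le_refl t, ?_⟩
    have : (∫ x, f x ∂μ) = f x₀ := Subsingleton.elim _ _
    rw [this]
    exact subset_convexHull ℝ _ ⟨x₀, hx₀, rfl⟩
  | succ k ih =>
    intro E _ _ _ hrk X _ μ _ f hf t ht
    classical
    set m : E := ∫ x, f x ∂μ with hm
    set C : Set E := convexHull ℝ (f '' t) with hC
    have htne : t.Nonempty := by
      by_contra h
      rw [Set.not_nonempty_iff_eq_empty] at h
      rw [h, Set.compl_empty, measure_univ] at ht
      exact one_ne_zero ht
    have hCconv : Convex ℝ C := convex_convexHull ℝ _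
    have hCne : C.Nonempty := (htne.image f).mono (subset_convexHull ℝ _)
    have hmcl : m ∈ closure C := by
      apply hCconv.closure.integral_mem isClosed_closure _ hf
      filter_upwards [measure_eq_zero_iff_ae_notMem.mp ht] with x hx
      exact subset_closure (subset_convexHull ℝ _ ⟨x, not_not.mp hx, rfl⟩)
    -- main reduction: given a nonzero functional L with L ≤ L m on C, reduce dimension
    have reduce : ∀ L : E →L[ℝ] ℝ, L ≠ 0 → (∀ y ∈ C, L y ≤ L m) →
        ∃ s : Set X, μ sᶜ = 0 ∧ s ⊆ t ∧ m ∈ convexHull ℝ (f '' s) := by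
      intro L hLne hle
      have hfC : ∀ x ∈ t, f x ∈ C := fun x hx => subset_convexHull ℝ _ ⟨x, hx, rfl⟩
      have hLf : Integrable (fun x => L (f x)) μ := L.integrable_comp hf
      have hLint : (∫ x, L (f x) ∂μ) = L m := (L.integral_comp_comm hf).symm ▸ rfl
      -- a.e. on t, L (f x) = L m
      have haet : ∀ᵐ x ∂μ, x ∈ t := measure_eq_zero_iff_ae_notMem.mp ht |>.mono
        (fun x hx => not_not.mp hx)
      have hnonneg : 0 ≤ᵐ[μ] fun x => L m - L (f x) := by
        filter_upwards [haet] with x hx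
        simpa using hle _ (hfC x hx)
      have hintzero : (∫ x, (L m - L (f x)) ∂μ) = 0 := by
        rw [integral_sub (integrable_const _) hLf, integral_const, probReal_univ]
        simp [hLint]
      have haeeq : (fun x => L m - L (f x)) =ᵐ[μ] 0 := by
        rw [← integral_eq_zero_iff_of_nonneg_ae hnonneg
          ((integrable_const _).sub hLf)]
        exact hintzero
      set N : Set X := t ∩ {x | L (f x) = L m} with hN
      have hNnull : μ Nᶜ = 0 := by
        rw [Set.compl_inter]
        refine measure_union_null ht ?_
        have : ∀ᵐ x ∂μ, L (f x) = L m := by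
          filter_upwards [haeeq] with x hx
          have : L m - L (f x) = 0 := hx
          linarith
        exact measure_eq_zero_iff_ae_notMem.mpr (this.mono fun x hx hxc => hxc hx)
      -- modified function
      set f₁ : X → E := fun x => if x ∈ N then f x else m with hf₁def
      have hf₁ae : f =ᵐ[μ] f₁ := by
        filter_upwards [measure_eq_zero_iff_ae_notMem.mp hNnull] with x hx
        simp [hf₁def, not_not.mp hx]
      have hf₁int : Integrable f₁ μ := hf.congr hf₁ae
      have hLf₁ : ∀ x, L (f₁ x) = L m := by
        intro x
        by_cases hx : x ∈ N
        · simp only [hf₁def, if_pos hx]; exact hx.2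
        · simp [hf₁def, hx]
      -- the kernel of L
      set K : Submodule ℝ E := LinearMap.ker (L : E →ₗ[ℝ] ℝ) with hK
      have hLsurj : Function.Surjective L := by
        obtain ⟨y, hy⟩ : ∃ y, L y ≠ 0 := by
          by_contra h
          push_neg at h
          exact hLne (by ext z; simpa using h z)
        intro c
        exact ⟨(c / L y) • y, by rw [map_smul, smul_eq_mul]; field_simp⟩
      have hKrank : finrank ℝ K ≤ k := by
        have h1 : finrank ℝ (LinearMap.range (L : E →ₗ[ℝ] ℝ)) + finrank ℝ (LinearMap.ker (L : E →ₗ[ℝ] ℝ)) = finrank ℝ E :=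
          LinearMap.finrank_range_add_finrank_ker (L : E →ₗ[ℝ] ℝ)
        have h2 : LinearMap.range (L : E →ₗ[ℝ] ℝ) = ⊤ := LinearMap.range_eq_top.mpr hLsurj
        rw [h2] at h1
        have h3 : finrank ℝ (⊤ : Submodule ℝ ℝ) = 1 := by simp
        rw [hK]
        omega
      have hmem : ∀ x, f₁ x - m ∈ K := by
        intro x
        simp [hK, LinearMap.mem_ker, map_sub, hLf₁ x]
      set g : X → K := fun x => K.orthogonalProjectionOnto (f₁ x - m) with hg
      have hgint : Integrable g μ :=
        K.orthogonalProjectionOnto.integrable_comp (hf₁int.sub (integrable_const m))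
      have hgval : ∀ x, (g x : E) = f₁ x - m := by
        intro x
        have := Submodule.orthogonalProjectionOnto_mem_subspace_eq_self (K := K) ⟨f₁ x - m, hmem x⟩
        rw [hg]
        exact congrArg Subtype.val this
      have hsubint : Integrable (fun x => f₁ x - m) μ := hf₁int.sub (integrable_const m)
      have hgzero : (∫ x, g x ∂μ) = 0 := by
        have hcc := K.orthogonalProjectionOnto.integral_comp_comm hsubint
        have hz : (∫ x, (f₁ x - m) ∂μ) = 0 := by
          rw [integral_sub hf₁int (integrable_const m), integral_const, probReal_univ,
            ← integral_congr_ae hf₁ae]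
          simp [← hm]
        show (∫ x, K.orthogonalProjectionOnto (f₁ x - m) ∂μ) = 0
        rw [hcc, hz, map_zero]
      obtain ⟨s, hs0, hsN, hsmem⟩ := ih K hKrank X μ g hgint N hNnull
      rw [hgzero] at hsmem
      refine ⟨s, hs0, hsN.trans (Set.inter_subset_left), ?_⟩
      -- affine map w ↦ w + m
      set A : K →ᵃ[ℝ] E := AffineMap.mk' (fun w => (w : E) + m) K.subtype 0
        (by intro p; simp) with hA
      have himg : A '' (g '' s) = f '' s := by
        rw [← Set.image_comp]
        apply Set.image_congr
        intro x hx
        have hxN : x ∈ N := hsN hx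
        simp only [Function.comp_apply, hA, AffineMap.coe_mk', hgval x]
        simp [hf₁def, hxN]
      have := Set.mem_image_of_mem A hsmem
      rw [AffineMap.image_convexHull, himg] at this
      simpa [hA] using this
    by_cases hspan : affineSpan ℝ C = ⊤
    · by_cases hmC : m ∈ C
      · exact ⟨t, ht, le_refl t, hmC⟩
      · have hint : (interior C).Nonempty :=
          hCconv.interior_nonempty_iff_affineSpan_eq_top.mpr hspan
        obtain ⟨L, hL⟩ := geometric_hahn_banach_open_point (hCconv.interior) isOpen_interior
          (fun h => hmC (interior_subset h))
        have hLne : L ≠ 0 := by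
          rintro rfl
          obtain ⟨y, hy⟩ := hint
          simpa using hL y hy
        refine reduce L hLne ?_
        intro y hy
        obtain ⟨z, hz⟩ := hint
        have key : ∀ a : ℝ, 0 < a → a ≤ 1 → L (a • z + (1 - a) • y) < L m := by
          intro a ha ha1
          exact hL _ (hCconv.combo_interior_closure_subset_interior ha (by linarith)
            (by ring) (Set.add_mem_add (Set.smul_mem_smul_set hz)
              (Set.smul_mem_smul_set (subset_closure hy))))
        have hcont : Continuous (fun a : ℝ => L (a • z + (1 - a) • y)) := by
          apply L.continuous.comp
          exact (continuous_id.smul continuous_const).add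
            ((continuous_const.sub continuous_id).smul continuous_const)
        have htend : Filter.Tendsto (fun a : ℝ => L (a • z + (1 - a) • y))
            (nhdsWithin 0 (Set.Ioc 0 1)) (nhds (L y)) := by
          have h0 := hcont.tendsto 0
          simp only [zero_smul, zero_add, sub_zero, one_smul] at h0
          exact h0.mono_left nhdsWithin_le_nhds
        haveI : (nhdsWithin (0:ℝ) (Set.Ioc 0 1)).NeBot := left_nhdsWithin_Ioc_neBot zero_lt_one
        refine le_of_tendsto htend ?_
        filter_upwards [self_mem_nhdsWithin] with a ha
        exact (key a ha.1 ha.2).le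
    · -- proper affine span: constant functional
      set W : Submodule ℝ E := (affineSpan ℝ C).direction with hW
      have hWne : W ≠ ⊤ := by
        intro h
        apply hspan
        obtain ⟨c, hc⟩ := hCne
        have hcs : c ∈ affineSpan ℝ C := subset_affineSpan ℝ C hc
        rw [← AffineSubspace.direction_eq_top_iff_of_nonempty ⟨c, hcs⟩]
        exact h
      have hWbot : Wᗮ ≠ ⊥ := by
        rw [Ne, Submodule.orthogonal_eq_bot_iff]
        exact hWne
      obtain ⟨u, huW, hune⟩ := Submodule.exists_mem_ne_zero_of_ne_bot hWbot
      have hmspan : m ∈ affineSpan ℝ C := by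
        have h1 : closure C ⊆ closure ((affineSpan ℝ C : Set E)) :=
          closure_mono (subset_affineSpan ℝ C)
        have h2 : closure ((affineSpan ℝ C : Set E)) = (affineSpan ℝ C : Set E) :=
          (affineSpan ℝ C).closed_of_finiteDimensional.closure_eq
        have := h1 hmcl
        rw [h2] at this
        exact this
      refine reduce (innerSL ℝ u) ?_ ?_
      · intro h
        apply hune
        have : (innerSL ℝ u) u = 0 := by rw [h]; rfl
        rw [innerSL_apply_apply] at this
        exact inner_self_eq_zero.mp this
      · intro y hy
        have hyspan : y ∈ affineSpan ℝ C := subset_affineSpan ℝ C hy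
        have hdir : y - m ∈ W := by
          have := AffineSubspace.vsub_mem_direction hyspan hmspan
          simpa [vsub_eq_sub] using this
        rw [Submodule.mem_orthogonal] at huW
        have h0 : inner ℝ u (y - m) = (0:ℝ) := by
          rw [real_inner_comm]
          exact huW _ hdir
        rw [inner_sub_right] at h0
        simp only [innerSL_apply_apply]
        linarith [h0]

open Set Module in
/-- For any Borel probability measure `D` on `ℝ^d` whose monomial moments up to total order `r`
exist, there is a Borel probability measure `G` whose support is a finite set of cardinality at
most the number of multi-indices of total degree at most `r`, having the same moments as `D` up
to total order `r`. -/
theorem exists_discrete_moment_matching (d r : ℕ) (D : Measure (Fin d → ℝ))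
    [IsProbabilityMeasure D]
    (hint : ∀ α : Fin d → ℕ, (∑ i, α i) ≤ r →
      Integrable (fun x : Fin d → ℝ => ∏ i, (x i) ^ (α i)) D) :
    ∃ G : Measure (Fin d → ℝ), IsProbabilityMeasure G ∧
      (measureSupport G).Finite ∧
      (measureSupport G).ncard ≤ Set.ncard {α : Fin d → ℕ | (∑ i, α i) ≤ r} ∧
      ∀ α : Fin d → ℕ, (∑ i, α i) ≤ r →
        ∫ x, ∏ i, (x i) ^ (α i) ∂G = ∫ x, ∏ i, (x i) ^ (α i) ∂D := by
  classical
  set S : Set (Fin d → ℕ) := {α : Fin d → ℕ | (∑ i, α i) ≤ r} with hS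
  have hSfin : S.Finite := by
    have hsub : S ⊆ Set.range (fun (f : Fin d → Fin (r+1)) => (fun i => (f i : ℕ))) := by
      intro α hα
      have hle : (∑ i, α i) ≤ r := hα
      refine ⟨fun i => ⟨α i, ?_⟩, rfl⟩
      have h1 : α i ≤ ∑ j, α j :=
        Finset.single_le_sum (fun j _ => Nat.zero_le _) (Finset.mem_univ i)
      omega
    exact (Set.finite_range _).subset hsub
  haveI : Fintype ↥S := hSfin.fintype
  set N : ℕ := Fintype.card ↥S with hN
  -- the moment map
  set ψ : (Fin d → ℝ) → (↥S → ℝ) := fun x a => ∏ i, (x i) ^ (a.1 i) with hψ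
  have hψcont : Continuous ψ :=
    continuous_pi fun a => continuous_finset_prod _ fun i _ => (continuous_apply i).pow _
  have hψint : Integrable ψ D := by
    refine Integrable.mono' (g := fun x => ∑ a : ↥S, |ψ x a|) ?_
      hψcont.aestronglyMeasurable ?_
    · exact integrable_finset_sum _ fun a _ => (hint a.1 a.2).abs
    · refine Filter.Eventually.of_forall fun x => ?_
      have hnn : (0:ℝ) ≤ ∑ a : ↥S, |ψ x a| :=
        Finset.sum_nonneg fun a _ => abs_nonneg _
      rw [pi_norm_le_iff_of_nonneg hnn]
      intro b
      rw [Real.norm_eq_abs]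
      exact Finset.single_le_sum (fun a _ => abs_nonneg (ψ x a)) (Finset.mem_univ b)
  set φ : (Fin d → ℝ) → EuclideanSpace ℝ ↥S :=
    fun x => (EuclideanSpace.equiv ↥S ℝ).symm (ψ x) with hφ
  have hφint : Integrable φ D :=
    (((EuclideanSpace.equiv ↥S ℝ).symm : (↥S → ℝ) →L[ℝ] EuclideanSpace ℝ ↥S)).integrable_comp
      hψint
  set m : EuclideanSpace ℝ ↥S := ∫ x, φ x ∂D with hm
  -- apply the convex hull lemma
  obtain ⟨s, hs0, -, hsmem⟩ := integral_mem_convexHull_aux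
    (finrank ℝ (EuclideanSpace ℝ ↥S)) (EuclideanSpace ℝ ↥S) le_rfl
    (Fin d → ℝ) D φ hφint Set.univ (by simp)
  rw [convexHull_eq_union] at hsmem
  simp only [Set.mem_iUnion] at hsmem
  obtain ⟨T, hTs, hTai, hmT⟩ := hsmem
  have hTne : T.Nonempty := by
    by_contra h
    rw [Finset.not_nonempty_iff_eq_empty] at h
    rw [h] at hmT
    simp at hmT
  -- coordinate at the zero multi-index is 1
  have ha₀ : (0 : Fin d → ℕ) ∈ S := by simp [hS]
  set a₀ : ↥S := ⟨0, ha₀⟩ with ha₀def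
  have hφ1 : ∀ x : Fin d → ℝ, φ x a₀ = 1 := by
    intro x
    show ψ x a₀ = 1
    simp [hψ, ha₀def]
  have hT1 : ∀ y ∈ T, (y : EuclideanSpace ℝ ↥S) a₀ = 1 := by
    intro y hy
    obtain ⟨x, -, rfl⟩ := hTs hy
    exact hφ1 x
  -- cardinality bound
  set ℓ : EuclideanSpace ℝ ↥S →L[ℝ] ℝ := EuclideanSpace.proj a₀ with hℓ
  have hℓapp : ∀ y : EuclideanSpace ℝ ↥S, ℓ y = y a₀ := fun y => rfl
  have hℓsurj : Function.Surjective ℓ := by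
    intro cc
    refine ⟨EuclideanSpace.single a₀ cc, ?_⟩
    rw [hℓapp]
    simp [EuclideanSpace.single_apply]
  have hNrank : finrank ℝ (EuclideanSpace ℝ ↥S) = N := finrank_euclideanSpace
  have hkerrank : finrank ℝ (LinearMap.ker (ℓ : EuclideanSpace ℝ ↥S →ₗ[ℝ] ℝ)) = N - 1 := by
    have h1 : finrank ℝ (LinearMap.range (ℓ : EuclideanSpace ℝ ↥S →ₗ[ℝ] ℝ)) + finrank ℝ (LinearMap.ker (ℓ : EuclideanSpace ℝ ↥S →ₗ[ℝ] ℝ)) =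
        finrank ℝ (EuclideanSpace ℝ ↥S) :=
      LinearMap.finrank_range_add_finrank_ker (ℓ : EuclideanSpace ℝ ↥S →ₗ[ℝ] ℝ)
    have h2 : LinearMap.range (ℓ : EuclideanSpace ℝ ↥S →ₗ[ℝ] ℝ) = ⊤ := LinearMap.range_eq_top.mpr hℓsurj
    rw [h2, hNrank] at h1
    have h3 : finrank ℝ (⊤ : Submodule ℝ ℝ) = 1 := by simp
    omega
  have hsubker : vectorSpan ℝ (↑T : Set (EuclideanSpace ℝ ↥S)) ≤ LinearMap.ker (ℓ : EuclideanSpace ℝ ↥S →ₗ[ℝ] ℝ) := by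
    rw [vectorSpan_def, Submodule.span_le]
    rintro v hv
    rw [Set.mem_vsub] at hv
    obtain ⟨y, hy, z, hz, rfl⟩ := hv
    have : ℓ (y -ᵥ z) = 0 := by
      rw [vsub_eq_sub, map_sub, hℓapp, hℓapp, hT1 y hy, hT1 z hz, sub_self]
    exact this
  have hTcard : T.card ≤ N := by
    obtain ⟨n', hn'⟩ : ∃ n', T.card = n' + 1 :=
      ⟨T.card - 1, (Nat.succ_pred_eq_of_pos (Finset.card_pos.mpr hTne)).symm⟩
    have hfc : Fintype.card ↥(↑T : Finset (EuclideanSpace ℝ ↥S)) = n' + 1 := by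
      rw [Fintype.card_coe, hn']
    have h1 := hTai.finrank_vectorSpan hfc
    have hle2 : vectorSpan ℝ (Set.range (Subtype.val : {x // x ∈ T} →
        EuclideanSpace ℝ ↥S)) ≤ LinearMap.ker (ℓ : EuclideanSpace ℝ ↥S →ₗ[ℝ] ℝ) := by
      rw [Subtype.range_coe_subtype, Finset.setOf_mem]
      exact hsubker
    have h2 := Submodule.finrank_mono hle2
    have hNpos : 0 < N := Fintype.card_pos_iff.mpr ⟨a₀⟩
    omega
  -- weights
  rw [Finset.convexHull_eq] at hmT
  obtain ⟨w, hw0, hw1, hwm⟩ := hmT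
  rw [Finset.centerMass_eq_of_sum_1 _ _ hw1] at hwm
  simp only [id] at hwm
  -- preimages
  have hchoice : ∀ y : EuclideanSpace ℝ ↥S, y ∈ T → ∃ x : Fin d → ℝ, φ x = y := by
    intro y hy
    obtain ⟨x, -, hx⟩ := hTs hy
    exact ⟨x, hx⟩
  set c : EuclideanSpace ℝ ↥S → (Fin d → ℝ) :=
    fun y => if h : ∃ x : Fin d → ℝ, φ x = y then h.choose else 0 with hcdef
  have hc : ∀ y ∈ T, φ (c y) = y := by
    intro y hy
    have h := hchoice y hy
    simp only [hcdef, dif_pos h]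
    exact h.choose_spec
  -- the discrete measure
  set G : Measure (Fin d → ℝ) :=
    ∑ y ∈ T, (ENNReal.ofReal (w y)) • Measure.dirac (c y) with hG
  have hGuniv : G Set.univ = 1 := by
    rw [hG, Measure.finset_sum_apply]
    simp only [Measure.smul_apply, measure_univ, smul_eq_mul, mul_one]
    rw [← ENNReal.ofReal_sum_of_nonneg fun y hy => hw0 y hy, hw1, ENNReal.ofReal_one]
  have hGprob : IsProbabilityMeasure G := ⟨hGuniv⟩
  -- support
  set F : Set (Fin d → ℝ) := ↑(T.image c) with hF
  have hFfin : F.Finite := (T.image c).finite_toSet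
  have hFclosed : IsClosed F := hFfin.isClosed
  have hGF : G Fᶜ = 0 := by
    rw [hG, Measure.finset_sum_apply]
    refine Finset.sum_eq_zero fun y hy => ?_
    rw [Measure.smul_apply]
    have hmem : c y ∈ F := Finset.mem_coe.mpr (Finset.mem_image_of_mem c hy)
    rw [Measure.dirac_apply' _ hFclosed.measurableSet.compl]
    simp [Set.indicator, hmem]
  have hGsupp : measureSupport G ⊆ F :=
    Set.sInter_subset_of_mem ⟨hFclosed, hGF⟩
  have hsuppfin : (measureSupport G).Finite := hFfin.subset hGsupp
  have hScard : S.ncard = N := by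
    rw [← Nat.card_coe_set_eq, Nat.card_eq_fintype_card]
  have hsuppcard : (measureSupport G).ncard ≤ S.ncard := by
    have h1 : (measureSupport G).ncard ≤ F.ncard := Set.ncard_le_ncard hGsupp hFfin
    rw [hF, Set.ncard_coe_finset] at h1
    have h2 : (T.image c).card ≤ T.card := Finset.card_image_le
    omega
  refine ⟨G, hGprob, hsuppfin, hsuppcard, ?_⟩
  -- moment matching
  intro α hα
  set a : ↥S := ⟨α, hα⟩ with hadef
  have hMcont : Continuous fun x : Fin d → ℝ => ∏ i, (x i) ^ (α i) :=
    continuous_finset_prod _ fun i _ => (continuous_apply i).pow _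
  have hdint : ∀ z : Fin d → ℝ,
      Integrable (fun x : Fin d → ℝ => ∏ i, (x i) ^ (α i)) (Measure.dirac z) := by
    intro z
    refine ⟨hMcont.aestronglyMeasurable, ?_⟩
    rw [hasFiniteIntegral_def, lintegral_dirac]
    exact ENNReal.coe_lt_top
  have hφa : ∀ x : Fin d → ℝ, (∏ i, (x i) ^ (α i)) = φ x a := fun x => rfl
  have h1 : (∫ x, ∏ i, (x i) ^ (α i) ∂G) = ∑ y ∈ T, w y * (y a) := by
    rw [hG, integral_finset_sum_measure fun y hy =>
      (hdint (c y)).smul_measure ENNReal.ofReal_ne_top]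
    refine Finset.sum_congr rfl fun y hy => ?_
    rw [integral_smul_measure, integral_dirac, ENNReal.toReal_ofReal (hw0 y hy)]
    rw [smul_eq_mul, hφa (c y), hc y hy]
  have h2 : (∫ x, ∏ i, (x i) ^ (α i) ∂D) = m a := by
    have h := (EuclideanSpace.proj (𝕜 := ℝ) a).integral_comp_comm hφint
    have heq : (fun x => (EuclideanSpace.proj (𝕜 := ℝ) a) (φ x)) =
        fun x : Fin d → ℝ => ∏ i, (x i) ^ (α i) := by
      funext x
      exact (hφa x).symm
    rw [heq] at h
    exact h
  have h3 : m a = ∑ y ∈ T, w y * (y a) := by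
    have h := congrArg (EuclideanSpace.proj (𝕜 := ℝ) a) hwm
    rw [map_sum] at h
    simp only [_root_.map_smul, smul_eq_mul] at h
    exact h.symm
  rw [h1, h2, h3]
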